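/- Let G be a connected undirected graph on vertices {1,…,n} (n ≥ 2) and let d ≥ 1. Then there exists a constant ν > 0 such that for every configuration x = (x_1,…,x_n) ∈ (ℝ^d)^n with ∑_{i=1}^n ‖x_i − x̄‖² = 1 (where x̄ = (1/n)∑_i x_i), one has (∑_{i=1}^n ‖F(x)_i‖²)^{1/2} ≥ ν. -/

import Mathlib

open Finset RealInnerProductSpace

/-- The bearing from agent `i` to agent `j`: the unit vector pointing from `x i` to `x j`,
or `0` when the agents coincide. -/
noncomputable def bearing {d n : ℕ} (x : Fin n → EuclideanSpace ℝ (Fin d)) (i j : Fin n) :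
    EuclideanSpace ℝ (Fin d) :=
  ‖x j - x i‖⁻¹ • (x j - x i)

/-- The bearing-only consensus vector field `F(x)_i = ∑_{j ∈ N_i} u_{ij}(x)`. -/
noncomputable def consField {d n : ℕ} (G : SimpleGraph (Fin n)) [DecidableRel G.Adj]
    (x : Fin n → EuclideanSpace ℝ (Fin d)) (i : Fin n) : EuclideanSpace ℝ (Fin d) :=
  ∑ j ∈ G.neighborFinset i, bearing x i j

section aux

variable {d n : ℕ}

lemma bearing_antisymm (x : Fin n → EuclideanSpace ℝ (Fin d)) (i j : Fin n) :
    bearing x j i = - bearing x i j := by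
  unfold bearing
  rw [show x i - x j = -(x j - x i) by abel, norm_neg, smul_neg]

lemma inner_bearing (x : Fin n → EuclideanSpace ℝ (Fin d)) (i j : Fin n) :
    ⟪bearing x i j, x i - x j⟫ = -‖x j - x i‖ := by
  unfold bearing
  rw [real_inner_smul_left, show x i - x j = -(x j - x i) by abel, inner_neg_right,
    real_inner_self_eq_norm_sq]
  rcases eq_or_ne (x j) (x i) with h | h
  · simp [h]
  · have h0 : ‖x j - x i‖ ≠ 0 := by
      simpa [sub_eq_zero] using h
    field_simp

lemma sum_neighbor_comm {M : Type*} [AddCommMonoid M] (G : SimpleGraph (Fin n))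
    [DecidableRel G.Adj] (f : Fin n → Fin n → M) :
    ∑ i, ∑ j ∈ G.neighborFinset i, f i j = ∑ i, ∑ j ∈ G.neighborFinset i, f j i := by
  simp only [SimpleGraph.neighborFinset_eq_filter, Finset.sum_filter]
  rw [Finset.sum_comm]
  refine Finset.sum_congr rfl fun j _ => Finset.sum_congr rfl fun i _ => ?_
  by_cases h : G.Adj i j
  · rw [if_pos h, if_pos h.symm]
  · rw [if_neg h, if_neg fun h' => h h'.symm]

lemma walk_sum_bound (x : Fin n → EuclideanSpace ℝ (Fin d)) {G : SimpleGraph (Fin n)}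
    {a b : Fin n} (p : G.Walk a b) :
    ‖x a - x b‖ ≤ (p.darts.map fun e => ‖x e.snd - x e.fst‖).sum := by
  induction p with
  | nil => simp
  | cons h q ih =>
    rename_i u v w
    simp only [SimpleGraph.Walk.darts_cons, List.map_cons, List.sum_cons]
    calc ‖x u - x w‖ ≤ ‖x u - x v‖ + ‖x v - x w‖ := norm_sub_le_norm_sub_add_norm_sub _ _ _
    _ ≤ ‖x v - x u‖ + (q.darts.map fun e => ‖x e.snd - x e.fst‖).sum := by
        rw [norm_sub_rev]; exact add_le_add le_rfl ih

end aux

theorem stmt_0 {d n : ℕ} (hd : 1 ≤ d) (hn : 2 ≤ n)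
    (G : SimpleGraph (Fin n)) [DecidableRel G.Adj] (hG : G.Connected) :
    ∃ ν : ℝ, 0 < ν ∧
      ∀ x : Fin n → EuclideanSpace ℝ (Fin d),
        (∑ i, ‖x i - (n : ℝ)⁻¹ • ∑ j, x j‖ ^ 2) = 1 →
        ν ≤ Real.sqrt (∑ i, ‖consField G x i‖ ^ 2) := by
  have hn0 : (0:ℝ) < n := by positivity
  refine ⟨(2 * n)⁻¹, by positivity, fun x hx => ?_⟩
  set c : EuclideanSpace ℝ (Fin d) := (n : ℝ)⁻¹ • ∑ j, x j with hc
  set T : ℝ := ∑ i, ∑ j ∈ G.neighborFinset i, ‖x j - x i‖ with hT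
  -- sum of field is zero
  have hFsum : ∑ i, consField G x i = 0 := by
    have h1 : ∑ i, consField G x i = ∑ i, ∑ j ∈ G.neighborFinset i, bearing x j i :=
      sum_neighbor_comm G _
    have h2 : ∑ i, ∑ j ∈ G.neighborFinset i, bearing x j i
        = - ∑ i, consField G x i := by
      rw [← Finset.sum_neg_distrib]
      refine Finset.sum_congr rfl fun i _ => ?_
      rw [consField, ← Finset.sum_neg_distrib]
      exact Finset.sum_congr rfl fun j _ => bearing_antisymm x i j
    have hS : ∑ i, consField G x i = - ∑ i, consField G x i := h1.trans h2
    have h3 : (2:ℝ) • ∑ i, consField G x i = 0 := by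
      rw [two_smul]
      nth_rewrite 1 [hS]
      simp
    rcases smul_eq_zero.mp h3 with h | h
    · norm_num at h
    · exact h
  -- inner identity
  have hinner : (2:ℝ) * ∑ i, ⟪consField G x i, x i⟫ = -T := by
    have e1 : ∑ i, ⟪consField G x i, x i⟫
        = ∑ i, ∑ j ∈ G.neighborFinset i, ⟪bearing x i j, x i⟫ := by
      simp [consField, sum_inner]
    have e2 : ∑ i, ∑ j ∈ G.neighborFinset i, ⟪bearing x i j, x i⟫
        = ∑ i, ∑ j ∈ G.neighborFinset i, ⟪bearing x j i, x j⟫ :=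
      sum_neighbor_comm G _
    have e3 : ∀ i j : Fin n, ⟪bearing x i j, x i⟫ + ⟪bearing x j i, x j⟫ = -‖x j - x i‖ := by
      intro i j
      rw [bearing_antisymm x i j, inner_neg_left, ← sub_eq_add_neg, ← inner_sub_right]
      exact inner_bearing x i j
    calc (2:ℝ) * ∑ i, ⟪consField G x i, x i⟫
        = ∑ i, ∑ j ∈ G.neighborFinset i, (⟪bearing x i j, x i⟫ + ⟪bearing x j i, x j⟫) := by
          rw [two_mul]
          nth_rewrite 1 [e1, e2, e1]
          rw [← Finset.sum_add_distrib]
          refine Finset.sum_congr rfl fun i _ => ?_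
          rw [← Finset.sum_add_distrib]
          refine Finset.sum_congr rfl fun j _ => ?_
          ring
      _ = ∑ i, ∑ j ∈ G.neighborFinset i, -‖x j - x i‖ := by
          exact Finset.sum_congr rfl fun i _ => Finset.sum_congr rfl fun j _ => e3 i j
      _ = -T := by simp [hT]
  -- A = -T/2
  have hA : ∑ i, ⟪consField G x i, x i - c⟫ = -(T/2) := by
    have : ∑ i, ⟪consField G x i, x i - c⟫
        = ∑ i, ⟪consField G x i, x i⟫ - ⟪∑ i, consField G x i, c⟫ := by
      rw [sum_inner, ← Finset.sum_sub_distrib]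
      exact Finset.sum_congr rfl fun i _ => by rw [inner_sub_right]
    rw [this, hFsum, inner_zero_left, sub_zero]
    linarith
  -- Cauchy-Schwarz : T/2 ≤ sqrt(∑ ‖F i‖²)
  have hCS : T / 2 ≤ Real.sqrt (∑ i, ‖consField G x i‖ ^ 2) := by
    have h1 : T / 2 = ∑ i, ⟪consField G x i, c - x i⟫ := by
      have : ∑ i, ⟪consField G x i, c - x i⟫ = - ∑ i, ⟪consField G x i, x i - c⟫ := by
        rw [← Finset.sum_neg_distrib]
        exact Finset.sum_congr rfl fun i _ => by
          rw [← inner_neg_right, neg_sub]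
      rw [this, hA]; ring
    have h2 : ∑ i, ⟪consField G x i, c - x i⟫ ≤ ∑ i, ‖consField G x i‖ * ‖x i - c‖ := by
      refine Finset.sum_le_sum fun i _ => ?_
      calc ⟪consField G x i, c - x i⟫ ≤ ‖consField G x i‖ * ‖c - x i‖ := real_inner_le_norm _ _
        _ = ‖consField G x i‖ * ‖x i - c‖ := by rw [norm_sub_rev]
    have h3 : ∑ i, ‖consField G x i‖ * ‖x i - c‖
        ≤ Real.sqrt (∑ i, ‖consField G x i‖ ^ 2) * Real.sqrt (∑ i, ‖x i - c‖ ^ 2) :=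
      Real.sum_mul_le_sqrt_mul_sqrt _ _ _
    rw [hx, Real.sqrt_one, mul_one] at h3
    linarith
  -- lower bound on T : every pairwise distance is ≤ T
  have hTnonneg : ∀ i j : Fin n, (0:ℝ) ≤ ‖x j - x i‖ := fun i j => norm_nonneg _
  have hpair : ∀ a b : Fin n, ‖x a - x b‖ ≤ T := by
    intro a b
    obtain ⟨w⟩ := hG.preconnected a b
    set p : G.Walk a b := (w.toPath : G.Walk a b) with hp
    have hdnd : p.darts.Nodup := by
      have he : p.edges.Nodup := w.toPath.2.isTrail.edges_nodup
      exact he.of_map _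
    calc ‖x a - x b‖ ≤ (p.darts.map fun e => ‖x e.snd - x e.fst‖).sum := walk_sum_bound x p
      _ = ∑ e ∈ p.darts.toFinset, ‖x e.snd - x e.fst‖ :=
          (List.sum_toFinset _ hdnd).symm
      _ ≤ ∑ e : G.Dart, ‖x e.snd - x e.fst‖ :=
          Finset.sum_le_sum_of_subset_of_nonneg (Finset.subset_univ _)
            (fun i _ _ => norm_nonneg _)
      _ = T := by
          rw [Fintype.sum_equiv
            (⟨fun d => ⟨d.fst, ⟨d.snd, (G.mem_neighborFinset _ _).mpr d.adj⟩⟩,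
              fun s => ⟨(s.1, s.2.1), (G.mem_neighborFinset _ _).mp s.2.2⟩,
              fun d => rfl, fun s => rfl⟩ :
              G.Dart ≃ Σ v : Fin n, (G.neighborFinset v : Finset (Fin n)))
            (fun d => ‖x d.snd - x d.fst‖) (fun s => ‖x s.2.1 - x s.1‖) (fun d => rfl), hT]
          rw [← Finset.univ_sigma_univ, Finset.sum_sigma]
          exact Finset.sum_congr rfl fun v _ =>
            Finset.sum_coe_sort (G.neighborFinset v) (fun j => ‖x j - x v‖)
  -- pick an index far from the centroid
  have h1n : (n:ℝ)⁻¹ ≤ 1 := by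
    rw [inv_le_one_iff₀]; right; exact_mod_cast Nat.one_le_of_lt hn
  obtain ⟨i0, -, hi0⟩ : ∃ i ∈ Finset.univ, (n:ℝ)⁻¹ ≤ ‖x i - c‖ ^ 2 := by
    have : Nonempty (Fin n) := ⟨⟨0, by omega⟩⟩
    refine Finset.exists_le_of_sum_le Finset.univ_nonempty ?_
    rw [hx, Finset.sum_const, Finset.card_univ, Fintype.card_fin, nsmul_eq_mul,
      mul_inv_cancel₀ (ne_of_gt hn0)]
  have hynorm : (n:ℝ)⁻¹ ≤ ‖x i0 - c‖ := by
    nlinarith [norm_nonneg (x i0 - c)]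
  have hyT : ‖x i0 - c‖ ≤ T := by
    have hrepr : x i0 - c = (n:ℝ)⁻¹ • ∑ j, (x i0 - x j) := by
      rw [Finset.sum_sub_distrib, Finset.sum_const, Finset.card_univ, Fintype.card_fin,
        smul_sub, hc, ← Nat.cast_smul_eq_nsmul ℝ, smul_smul,
        inv_mul_cancel₀ (ne_of_gt hn0), one_smul]
    calc ‖x i0 - c‖ = (n:ℝ)⁻¹ * ‖∑ j, (x i0 - x j)‖ := by
          rw [hrepr, norm_smul, Real.norm_eq_abs, abs_of_pos (by positivity)]
      _ ≤ (n:ℝ)⁻¹ * ∑ j, ‖x i0 - x j‖ := by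
          gcongr
          exact norm_sum_le _ _
      _ ≤ (n:ℝ)⁻¹ * ((n:ℝ) * T) := by
          have hs : ∑ j, ‖x i0 - x j‖ ≤ ∑ _j : Fin n, T :=
            Finset.sum_le_sum fun j _ => hpair i0 j
          rw [Finset.sum_const, Finset.card_univ, Fintype.card_fin, nsmul_eq_mul] at hs
          have h0 : (0:ℝ) ≤ (n:ℝ)⁻¹ := by positivity
          nlinarith
      _ = T := by field_simp
  have h2n : (2*(n:ℝ))⁻¹ = (n:ℝ)⁻¹ / 2 := by rw [mul_inv]; ring
  linarith
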